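/- arXiv:2509.14047 — 4 statements merged into one kernel-verified Lean document; each statement's English description precedes it below -/
import Mathlib

section
/- Suppose a system with matrices A, B, C, D and storage matrix P ≻ 0 satisfies the dissipativity LMI [I,0;A,B]ᵀ diag(P,−P)[I,0;A,B] + [0,I;C,D]ᵀ S [0,I;C,D] ≥ 0, where S ∈ S^{q+p} is invertible with inertia (p,0,q). Then the dual LMI holds: [I,0;Aᵀ,Cᵀ]ᵀ diag(P⁻¹, −P⁻¹)[I,0;Aᵀ,Cᵀ] + [0,I;Bᵀ,Dᵀ]ᵀ [0,−I;I,0] S⁻¹ [0,−I;I,0] [0,I;Bᵀ,Dᵀ] ≥ 0. -/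
open Matrix

/-- The inertia (ρ₋, ρ₀, ρ₊) of a real symmetric matrix. -/
noncomputable def inertia {n : Type*} [Fintype n] [DecidableEq n]
    (A : Matrix n n ℝ) (hA : A.IsHermitian) : ℕ × ℕ × ℕ :=
  (Fintype.card {i // hA.eigenvalues i < 0},
   Fintype.card {i // hA.eigenvalues i = 0},
   Fintype.card {i // 0 < hA.eigenvalues i})

lemma dot_self_nonneg' {κ : Type*} [Fintype κ] (v : κ → ℝ) : 0 ≤ v ⬝ᵥ v :=
  Finset.sum_nonneg fun i _ => mul_self_nonneg (v i)

lemma dot_self_eq_zero' {κ : Type*} [Fintype κ] {v : κ → ℝ} (h : v ⬝ᵥ v = 0) : v = 0 := by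
  funext i
  have := Finset.sum_eq_zero_iff_of_nonneg (fun j _ => mul_self_nonneg (v j)) |>.mp h i
    (Finset.mem_univ i)
  simpa [mul_self_eq_zero] using this

/-- Key rank/counting lemma: if `Q = ‖α ·‖² - ‖β ·‖²` is nonnegative on the range of an
injective `φ` whose domain has dimension at least that of the target of `α`, and `v₀` has
vanishing `Q`-cross terms with the range of `φ`, then `Q v₀ ≤ 0`. -/
lemma key_rank' {E : Type*} [AddCommGroup E] [Module ℝ E]
    {ι κ κ' : Type*} [Fintype ι] [Fintype κ] [Fintype κ']
    (α : E →ₗ[ℝ] (κ → ℝ)) (β : E →ₗ[ℝ] (κ' → ℝ))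
    (Q : E → ℝ) (hQ : ∀ v, Q v = α v ⬝ᵥ α v - β v ⬝ᵥ β v)
    (hab : ∀ v, α v = 0 → β v = 0 → v = 0)
    (φ : (ι → ℝ) →ₗ[ℝ] E) (hφ : Function.Injective φ)
    (hcard : Fintype.card κ ≤ Fintype.card ι)
    (hφQ : ∀ a, 0 ≤ Q (φ a))
    (v₀ : E) (hmix : ∀ (a : ι → ℝ) (t : ℝ), Q (φ a + t • v₀) = Q (φ a) + t ^ 2 * Q v₀) :
    Q v₀ ≤ 0 := by
  by_contra hpos
  push_neg at hpos
  set Ψ : ((ι → ℝ) × ℝ) →ₗ[ℝ] (κ → ℝ) :=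
    (α.comp φ).comp (LinearMap.fst ℝ (ι → ℝ) ℝ) +
      (LinearMap.toSpanSingleton ℝ (κ → ℝ) (α v₀)).comp (LinearMap.snd ℝ (ι → ℝ) ℝ) with hΨ
  have hΨapp : ∀ (a : ι → ℝ) (t : ℝ), Ψ (a, t) = α (φ a + t • v₀) := by
    intro a t
    simp [hΨ, LinearMap.toSpanSingleton_apply, map_add, _root_.map_smul]
  have hker : ∀ z : (ι → ℝ) × ℝ, Ψ z = 0 → z = 0 := by
    rintro ⟨a, t⟩ hz
    rw [hΨapp] at hz
    set v := φ a + t • v₀ with hv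
    have hQle : Q v ≤ 0 := by
      rw [hQ, hz, zero_dotProduct]
      have := dot_self_nonneg' (β v)
      linarith
    have hQeq : Q v = Q (φ a) + t ^ 2 * Q v₀ := hmix a t
    have h1 : 0 ≤ Q (φ a) := hφQ a
    have h2 : 0 ≤ t ^ 2 * Q v₀ := mul_nonneg (sq_nonneg t) hpos.le
    have ht2 : t ^ 2 * Q v₀ = 0 := by linarith
    have ht : t = 0 := by
      have : t ^ 2 = 0 := by
        rcases mul_eq_zero.mp ht2 with h | h
        · exact h
        · exact absurd h hpos.ne'
      exact pow_eq_zero_iff two_ne_zero |>.mp this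
    have hQa : Q (φ a) = 0 := by linarith [hQeq, hQle, ht2]
    have hva : v = φ a := by rw [hv, ht, zero_smul, add_zero]
    have hβ : β v = 0 := by
      apply dot_self_eq_zero'
      have h5 := hQ v
      rw [hz, zero_dotProduct] at h5
      have hQv0 : Q v = 0 := by rw [hQeq, hQa, ht]; ring
      linarith
    have hv0 : v = 0 := hab v hz hβ
    have ha : a = 0 := hφ (by rw [← hva, hv0, map_zero])
    simp [ha, ht]
  have hinj : Function.Injective Ψ := by
    rw [← LinearMap.ker_eq_bot, LinearMap.ker_eq_bot']
    intro m hm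
    exact hker m hm
  have hle := LinearMap.finrank_le_finrank_of_injective hinj
  rw [Module.finrank_prod, Module.finrank_pi, Module.finrank_pi, Module.finrank_self] at hle
  omega

lemma quad_KHK' {m k : Type*} [Fintype m] [Fintype k] (K : Matrix k m ℝ) (H : Matrix k k ℝ)
    (w : m → ℝ) : w ⬝ᵥ ((Kᵀ * H * K) *ᵥ w) = (K *ᵥ w) ⬝ᵥ (H *ᵥ (K *ᵥ w)) := by
  rw [← mulVec_mulVec, ← mulVec_mulVec, dotProduct_mulVec, vecMul_transpose]

lemma quad_expand' {k : Type*} [Fintype k] (M : Matrix k k ℝ) (hM : Mᵀ = M) (u u0 : k → ℝ)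
    (t : ℝ) :
    (u + t • u0) ⬝ᵥ (M *ᵥ (u + t • u0)) =
      u ⬝ᵥ (M *ᵥ u) + t ^ 2 * (u0 ⬝ᵥ (M *ᵥ u0)) + 2 * t * (u ⬝ᵥ (M *ᵥ u0)) := by
  have h : u0 ⬝ᵥ (M *ᵥ u) = u ⬝ᵥ (M *ᵥ u0) := by
    rw [dotProduct_mulVec]
    conv_lhs => rw [← hM, vecMul_transpose]
    rw [dotProduct_comm]
  simp only [mulVec_add, mulVec_smul, dotProduct_add, add_dotProduct, dotProduct_smul,
    smul_dotProduct, smul_eq_mul, h]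
  ring

lemma quad_diag' {k k' : Type*} [Fintype k] [Fintype k'] (M : Matrix k k ℝ)
    (N : Matrix k' k' ℝ) (s : k → ℝ) (t : k' → ℝ) :
    Sum.elim s t ⬝ᵥ (fromBlocks M 0 0 N *ᵥ Sum.elim s t) = s ⬝ᵥ (M *ᵥ s) + t ⬝ᵥ (N *ᵥ t) := by
  rw [fromBlocks_mulVec]
  simp [sumElim_dotProduct_sumElim]

open scoped MatrixOrder in
lemma sqrt_exists' {n : ℕ} {P : Matrix (Fin n) (Fin n) ℝ} (hP : P.PosDef) :
    ∃ sp : Matrix (Fin n) (Fin n) ℝ, sp * sp = P ∧ spᵀ = sp :=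
  ⟨CFC.sqrt P, CFC.sqrt_mul_sqrt_self P hP.posSemidef.nonneg, by
    rw [← conjTranspose_eq_transpose_of_trivial]; exact (CFC.sqrt_nonneg P).posSemidef.1⟩

/-- Dual dissipativity LMI: if the primal dissipativity LMI holds with P ≻ 0
and S invertible with inertia (p,0,q), then the dual LMI holds. -/
theorem stmt_6 {n q p : ℕ}
    (A : Matrix (Fin n) (Fin n) ℝ) (B : Matrix (Fin n) (Fin q) ℝ)
    (C : Matrix (Fin p) (Fin n) ℝ) (D : Matrix (Fin p) (Fin q) ℝ)
    (S : Matrix (Fin q ⊕ Fin p) (Fin q ⊕ Fin p) ℝ)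
    (hS : S.IsHermitian) (hSinv : IsUnit S)
    (hin : inertia S hS = (p, 0, q))
    (P : Matrix (Fin n) (Fin n) ℝ) (hP : P.PosDef)
    (hLMI : ((fromBlocks (1 : Matrix (Fin n) (Fin n) ℝ) 0 A B)ᵀ * fromBlocks P 0 0 (-P) * fromBlocks (1 : Matrix (Fin n) (Fin n) ℝ) 0 A B +
             (fromBlocks 0 (1 : Matrix (Fin q) (Fin q) ℝ) C D)ᵀ * S * fromBlocks 0 (1 : Matrix (Fin q) (Fin q) ℝ) C D).PosSemidef) :
    ((fromBlocks (1 : Matrix (Fin n) (Fin n) ℝ) 0 Aᵀ Cᵀ)ᵀ * fromBlocks P⁻¹ 0 0 (-(P⁻¹)) * fromBlocks (1 : Matrix (Fin n) (Fin n) ℝ) 0 Aᵀ Cᵀ +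
     (fromBlocks 0 (1 : Matrix (Fin p) (Fin p) ℝ) Bᵀ Dᵀ)ᵀ *
       ((fromBlocks 0 (-1) 1 0 : Matrix (Fin p ⊕ Fin q) (Fin q ⊕ Fin p) ℝ) * S⁻¹ *
        (fromBlocks 0 (-1) 1 0 : Matrix (Fin q ⊕ Fin p) (Fin p ⊕ Fin q) ℝ)) *
       fromBlocks 0 (1 : Matrix (Fin p) (Fin p) ℝ) Bᵀ Dᵀ).PosSemidef := by
  -- eigen data of S
  set l := hS.eigenvalues with hl
  set U : Matrix (Fin q ⊕ Fin p) (Fin q ⊕ Fin p) ℝ :=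
    (hS.eigenvectorUnitary : Matrix (Fin q ⊕ Fin p) (Fin q ⊕ Fin p) ℝ) with hUdef
  have hspec : S = U * diagonal l * star U := by
    have h := hS.spectral_theorem
    rw [RCLike.ofReal_real_eq_id] at h
    simpa using h
  -- invertibility facts
  have hPdet : IsUnit P.det := isUnit_iff_ne_zero.mpr hP.det_pos.ne'
  have hPP : P * P⁻¹ = 1 := mul_nonsing_inv P hPdet
  have hP'P : P⁻¹ * P = 1 := nonsing_inv_mul P hPdet
  have hSdet : IsUnit S.det := (isUnit_iff_isUnit_det S).mp hSinv
  have hSS : S * S⁻¹ = 1 := mul_nonsing_inv S hSdet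
  have hS'S : S⁻¹ * S = 1 := nonsing_inv_mul S hSdet
  have hPt : Pᵀ = P := by
    rw [← conjTranspose_eq_transpose_of_trivial]; exact hP.1
  have hSt : Sᵀ = S := by
    rw [← conjTranspose_eq_transpose_of_trivial]; exact hS
  have hPinvT : (P⁻¹)ᵀ = P⁻¹ := by rw [transpose_nonsing_inv, hPt]
  have hSinvT : (S⁻¹)ᵀ = S⁻¹ := by rw [transpose_nonsing_inv, hSt]
  -- square root of P
  obtain ⟨sp, hspsp, hspt⟩ := sqrt_exists' hP
  have hPquad : ∀ x : Fin n → ℝ, x ⬝ᵥ (P *ᵥ x) = (sp *ᵥ x) ⬝ᵥ (sp *ᵥ x) := by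
    intro x
    rw [← hspsp, ← mulVec_mulVec, dotProduct_mulVec, ← mulVec_transpose, hspt]
  have hSquad : ∀ y : (Fin q ⊕ Fin p) → ℝ,
      y ⬝ᵥ (S *ᵥ y) = ∑ i, l i * ((star U *ᵥ y) i) ^ 2 := by
    intro y
    conv_lhs => rw [hspec]
    rw [← mulVec_mulVec, ← mulVec_mulVec, dotProduct_mulVec]
    have h1 : y ᵥ* U = star U *ᵥ y := by
      rw [star_eq_conjTranspose, conjTranspose_eq_transpose_of_trivial, mulVec_transpose]
    rw [h1, dotProduct]
    refine Finset.sum_congr rfl fun i _ => ?_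
    rw [mulVec_diagonal]
    ring
  -- splitting over eigenvalue signs
  have hsplit : ∀ c : (Fin q ⊕ Fin p) → ℝ,
      ∑ i, l i * (c i) ^ 2
        = (∑ i : {i // 0 < l i}, (Real.sqrt (l i.1) * c i.1) * (Real.sqrt (l i.1) * c i.1))
          - ∑ i : {i // l i < 0}, (Real.sqrt (-l i.1) * c i.1) * (Real.sqrt (-l i.1) * c i.1) := by
    intro c
    have hposval : ∀ i : {i // 0 < l i},
        (Real.sqrt (l i.1) * c i.1) * (Real.sqrt (l i.1) * c i.1) = l i.1 * c i.1 ^ 2 := by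
      intro i
      have h := Real.mul_self_sqrt i.2.le
      calc (Real.sqrt (l i.1) * c i.1) * (Real.sqrt (l i.1) * c i.1)
          = (Real.sqrt (l i.1) * Real.sqrt (l i.1)) * (c i.1 * c i.1) := by ring
        _ = l i.1 * c i.1 ^ 2 := by rw [h]; ring
    have hnegval : ∀ i : {i // l i < 0},
        (Real.sqrt (-l i.1) * c i.1) * (Real.sqrt (-l i.1) * c i.1) = -(l i.1) * c i.1 ^ 2 := by
      intro i
      have h := Real.mul_self_sqrt (neg_nonneg.mpr i.2.le)
      calc (Real.sqrt (-l i.1) * c i.1) * (Real.sqrt (-l i.1) * c i.1)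
          = (Real.sqrt (-l i.1) * Real.sqrt (-l i.1)) * (c i.1 * c i.1) := by ring
        _ = -(l i.1) * c i.1 ^ 2 := by rw [h]; ring
    rw [Finset.sum_congr rfl fun i (_ : i ∈ Finset.univ) => hposval i,
      Finset.sum_congr rfl fun i (_ : i ∈ Finset.univ) => hnegval i]
    rw [← Finset.sum_subtype (Finset.univ.filter fun i => 0 < l i)
        (fun i => by simp) (fun i => l i * c i ^ 2),
      ← Finset.sum_subtype (Finset.univ.filter fun i => l i < 0)
        (fun i => by simp) (fun i => -(l i) * c i ^ 2)]
    rw [Finset.sum_filter, Finset.sum_filter, ← Finset.sum_sub_distrib]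
    refine Finset.sum_congr rfl fun i _ => ?_
    rcases lt_trichotomy (l i) 0 with h | h | h
    · rw [if_neg (by linarith), if_pos h]; ring
    · rw [if_neg (by simp [h]), if_neg (by simp [h]), h]; ring
    · rw [if_pos h, if_neg (by linarith)]; ring
  classical
  -- cardinality of positive eigenvalues
  have hcardpos : Fintype.card {i // 0 < l i} = q := by
    have h3 := congrArg (fun x : ℕ × ℕ × ℕ => x.2.2) hin
    simpa [inertia, ← hl] using h3
  -- quadratic form on the big space
  set Q : ((Fin n → ℝ) × (Fin n → ℝ) × ((Fin q ⊕ Fin p) → ℝ)) → ℝ :=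
    fun v => v.1 ⬝ᵥ (P *ᵥ v.1) - v.2.1 ⬝ᵥ (P *ᵥ v.2.1) + v.2.2 ⬝ᵥ (S *ᵥ v.2.2) with hQdef
  set Bl : ((Fin n → ℝ) × (Fin n → ℝ) × ((Fin q ⊕ Fin p) → ℝ)) →
      ((Fin n → ℝ) × (Fin n → ℝ) × ((Fin q ⊕ Fin p) → ℝ)) → ℝ :=
    fun v w => v.1 ⬝ᵥ (P *ᵥ w.1) - v.2.1 ⬝ᵥ (P *ᵥ w.2.1) + v.2.2 ⬝ᵥ (S *ᵥ w.2.2) with hBl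
  -- the maps α and β
  let α : ((Fin n → ℝ) × (Fin n → ℝ) × ((Fin q ⊕ Fin p) → ℝ)) →ₗ[ℝ]
      ((Fin n ⊕ {i // 0 < l i}) → ℝ) :=
    { toFun := fun v => Sum.elim (sp *ᵥ v.1)
        (fun i => Real.sqrt (l i.1) * (star U *ᵥ v.2.2) i.1)
      map_add' := by
        intro v w
        funext i
        cases i with
        | inl i => simp [mulVec_add]
        | inr i => simp [mulVec_add, mul_add]
      map_smul' := by
        intro t v
        funext i
        cases i with
        | inl i => simp [mulVec_smul]
        | inr i =>
          simp [mulVec_smul]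
          ring }
  let β : ((Fin n → ℝ) × (Fin n → ℝ) × ((Fin q ⊕ Fin p) → ℝ)) →ₗ[ℝ]
      ((Fin n ⊕ {i // l i < 0}) → ℝ) :=
    { toFun := fun v => Sum.elim (sp *ᵥ v.2.1)
        (fun i => Real.sqrt (-l i.1) * (star U *ᵥ v.2.2) i.1)
      map_add' := by
        intro v w
        funext i
        cases i with
        | inl i => simp [mulVec_add]
        | inr i => simp [mulVec_add, mul_add]
      map_smul' := by
        intro t v
        funext i
        cases i with
        | inl i => simp [mulVec_smul]
        | inr i =>
          simp [mulVec_smul]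
          ring }
  have hαapp : ∀ v : ((Fin n → ℝ) × (Fin n → ℝ) × ((Fin q ⊕ Fin p) → ℝ)),
      α v = Sum.elim (sp *ᵥ v.1) (fun i => Real.sqrt (l i.1) * (star U *ᵥ v.2.2) i.1) :=
    fun _ => rfl
  have hβapp : ∀ v : ((Fin n → ℝ) × (Fin n → ℝ) × ((Fin q ⊕ Fin p) → ℝ)),
      β v = Sum.elim (sp *ᵥ v.2.1) (fun i => Real.sqrt (-l i.1) * (star U *ᵥ v.2.2) i.1) :=
    fun _ => rfl
  have hQαβ : ∀ v, Q v = α v ⬝ᵥ α v - β v ⬝ᵥ β v := by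
    intro v
    rw [hαapp, hβapp, sumElim_dotProduct_sumElim, sumElim_dotProduct_sumElim, hQdef]
    simp only
    rw [hPquad v.1, hPquad v.2.1, hSquad v.2.2, hsplit (star U *ᵥ v.2.2)]
    simp only [dotProduct]
    ring
  have hab : ∀ v, α v = 0 → β v = 0 → v = 0 := by
    intro v hα hβ2
    obtain ⟨v1, v2, v3⟩ := v
    rw [hαapp] at hα
    rw [hβapp] at hβ2
    have hsp1 : sp *ᵥ v1 = 0 := funext fun j => congrFun hα (Sum.inl j)
    have hsp2 : sp *ᵥ v2 = 0 := funext fun j => congrFun hβ2 (Sum.inl j)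
    have hv1 : v1 = 0 := by
      have hPv : P *ᵥ v1 = 0 := by rw [← hspsp, ← mulVec_mulVec, hsp1, mulVec_zero]
      calc v1 = (P⁻¹ * P) *ᵥ v1 := by rw [hP'P, one_mulVec]
        _ = 0 := by rw [← mulVec_mulVec, hPv, mulVec_zero]
    have hv2 : v2 = 0 := by
      have hPv : P *ᵥ v2 = 0 := by rw [← hspsp, ← mulVec_mulVec, hsp2, mulVec_zero]
      calc v2 = (P⁻¹ * P) *ᵥ v2 := by rw [hP'P, one_mulVec]
        _ = 0 := by rw [← mulVec_mulVec, hPv, mulVec_zero]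
    have hcz : ∀ i, l i * (star U *ᵥ v3) i = 0 := by
      intro i
      rcases lt_trichotomy (l i) 0 with h | h | h
      · have h6 := congrFun hβ2 (Sum.inr ⟨i, h⟩)
        have hs : Real.sqrt (-l i) ≠ 0 := (Real.sqrt_pos.mpr (by linarith)).ne'
        have hc : (star U *ᵥ v3) i = 0 := by
          rcases mul_eq_zero.mp h6 with h' | h'
          · exact absurd h' hs
          · exact h'
        rw [hc]; ring
      · rw [h]; ring
      · have h6 := congrFun hα (Sum.inr ⟨i, h⟩)
        have hs : Real.sqrt (l i) ≠ 0 := (Real.sqrt_pos.mpr h).ne'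
        have hc : (star U *ᵥ v3) i = 0 := by
          rcases mul_eq_zero.mp h6 with h' | h'
          · exact absurd h' hs
          · exact h'
        rw [hc]; ring
    have hSv : S *ᵥ v3 = 0 := by
      rw [hspec, ← mulVec_mulVec, ← mulVec_mulVec]
      have hd : diagonal l *ᵥ (star U *ᵥ v3) = 0 := by
        funext i
        rw [mulVec_diagonal]
        exact hcz i
      rw [hd, mulVec_zero]
    have hv3 : v3 = 0 := by
      calc v3 = (S⁻¹ * S) *ᵥ v3 := by rw [hS'S, one_mulVec]
        _ = 0 := by rw [← mulVec_mulVec, hSv, mulVec_zero]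
    rw [hv1, hv2, hv3]
    rfl
  -- the graph map of the primal system
  let φ : ((Fin n ⊕ Fin q) → ℝ) →ₗ[ℝ] ((Fin n → ℝ) × (Fin n → ℝ) × ((Fin q ⊕ Fin p) → ℝ)) :=
    { toFun := fun a => (a ∘ Sum.inl, A *ᵥ (a ∘ Sum.inl) + B *ᵥ (a ∘ Sum.inr),
        Sum.elim (a ∘ Sum.inr) (C *ᵥ (a ∘ Sum.inl) + D *ᵥ (a ∘ Sum.inr)))
      map_add' := by
        intro a b
        have h1 : (a + b) ∘ Sum.inl = a ∘ Sum.inl + b ∘ Sum.inl := rfl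
        have h2 : (a + b) ∘ Sum.inr = a ∘ Sum.inr + b ∘ Sum.inr := rfl
        refine Prod.ext h1 (Prod.ext ?_ ?_)
        · show A *ᵥ ((a + b) ∘ Sum.inl) + B *ᵥ ((a + b) ∘ Sum.inr) = _
          rw [h1, h2, mulVec_add, mulVec_add]
          show _ = (A *ᵥ (a ∘ Sum.inl) + B *ᵥ (a ∘ Sum.inr)) +
            (A *ᵥ (b ∘ Sum.inl) + B *ᵥ (b ∘ Sum.inr))
          abel
        · show Sum.elim ((a + b) ∘ Sum.inr)
              (C *ᵥ ((a + b) ∘ Sum.inl) + D *ᵥ ((a + b) ∘ Sum.inr)) = _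
          rw [h1, h2, mulVec_add, mulVec_add]
          funext i
          cases i with
          | inl i => simp
          | inr i => simp; abel
      map_smul' := by
        intro t a
        have h1 : (t • a) ∘ Sum.inl = t • (a ∘ Sum.inl) := rfl
        have h2 : (t • a) ∘ Sum.inr = t • (a ∘ Sum.inr) := rfl
        refine Prod.ext h1 (Prod.ext ?_ ?_)
        · show A *ᵥ ((t • a) ∘ Sum.inl) + B *ᵥ ((t • a) ∘ Sum.inr) = _
          rw [h1, h2, mulVec_smul, mulVec_smul]
          show _ = t • (A *ᵥ (a ∘ Sum.inl) + B *ᵥ (a ∘ Sum.inr))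
          rw [smul_add]
        · show Sum.elim ((t • a) ∘ Sum.inr)
              (C *ᵥ ((t • a) ∘ Sum.inl) + D *ᵥ ((t • a) ∘ Sum.inr)) = _
          rw [h1, h2, mulVec_smul, mulVec_smul]
          funext i
          cases i with
          | inl i => simp
          | inr i => simp; ring }
  have hφapp : ∀ a : (Fin n ⊕ Fin q) → ℝ,
      φ a = (a ∘ Sum.inl, A *ᵥ (a ∘ Sum.inl) + B *ᵥ (a ∘ Sum.inr),
        Sum.elim (a ∘ Sum.inr) (C *ᵥ (a ∘ Sum.inl) + D *ᵥ (a ∘ Sum.inr))) := fun _ => rfl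
  have hφ : Function.Injective φ := by
    intro a b hEq
    have h1 := congrArg (fun v : ((Fin n → ℝ) × (Fin n → ℝ) × ((Fin q ⊕ Fin p) → ℝ)) => v.1) hEq
    have h3 := congrArg
      (fun v : ((Fin n → ℝ) × (Fin n → ℝ) × ((Fin q ⊕ Fin p) → ℝ)) => v.2.2) hEq
    funext i
    cases i with
    | inl j => exact congrFun h1 j
    | inr j => exact congrFun h3 (Sum.inl j)
  have hcard : Fintype.card (Fin n ⊕ {i // 0 < l i}) ≤ Fintype.card (Fin n ⊕ Fin q) := by
    simp [Fintype.card_sum, hcardpos]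
  have hφQ : ∀ a, 0 ≤ Q (φ a) := by
    intro a
    have h2 := hLMI.dotProduct_mulVec_nonneg a
    have hstar : star a = a := funext fun _ => rfl
    rw [hstar, add_mulVec, dotProduct_add, quad_KHK', quad_KHK'] at h2
    have hK1 : fromBlocks 1 0 A B *ᵥ a =
        Sum.elim (a ∘ Sum.inl) (A *ᵥ (a ∘ Sum.inl) + B *ᵥ (a ∘ Sum.inr)) := by
      rw [fromBlocks_mulVec, one_mulVec, zero_mulVec, add_zero]
    have hK2 : fromBlocks 0 1 C D *ᵥ a =
        Sum.elim (a ∘ Sum.inr) (C *ᵥ (a ∘ Sum.inl) + D *ᵥ (a ∘ Sum.inr)) := by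
      rw [fromBlocks_mulVec, one_mulVec, zero_mulVec, zero_add]
    rw [hK1, hK2, quad_diag', neg_mulVec, dotProduct_neg] at h2
    have hQφ : Q (φ a) = (a ∘ Sum.inl) ⬝ᵥ (P *ᵥ (a ∘ Sum.inl))
        - (A *ᵥ (a ∘ Sum.inl) + B *ᵥ (a ∘ Sum.inr)) ⬝ᵥ
            (P *ᵥ (A *ᵥ (a ∘ Sum.inl) + B *ᵥ (a ∘ Sum.inr)))
        + Sum.elim (a ∘ Sum.inr) (C *ᵥ (a ∘ Sum.inl) + D *ᵥ (a ∘ Sum.inr)) ⬝ᵥ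
            (S *ᵥ Sum.elim (a ∘ Sum.inr) (C *ᵥ (a ∘ Sum.inl) + D *ᵥ (a ∘ Sum.inr))) := rfl
    rw [hQφ]
    linarith
  have hQexp : ∀ (v w : (Fin n → ℝ) × (Fin n → ℝ) × ((Fin q ⊕ Fin p) → ℝ)) (t : ℝ),
      Q (v + t • w) = Q v + t ^ 2 * Q w + 2 * t * Bl v w := by
    intro v w t
    simp only [hQdef, hBl, Prod.fst_add, Prod.snd_add, Prod.smul_fst, Prod.smul_snd]
    rw [quad_expand' P hPt, quad_expand' P hPt, quad_expand' S hSt]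
    ring
  refine PosSemidef.of_dotProduct_mulVec_nonneg ?_ ?_
  · -- Hermitian part
    apply Matrix.IsHermitian.add
    · have h1 : (fromBlocks 1 0 Aᵀ Cᵀ : Matrix (Fin n ⊕ Fin n) (Fin n ⊕ Fin p) ℝ)ᵀ =
          (fromBlocks 1 0 Aᵀ Cᵀ : Matrix (Fin n ⊕ Fin n) (Fin n ⊕ Fin p) ℝ)ᴴ :=
        (conjTranspose_eq_transpose_of_trivial _).symm
      rw [h1]
      apply isHermitian_conjTranspose_mul_mul
      show _ᴴ = _
      rw [conjTranspose_eq_transpose_of_trivial, fromBlocks_transpose]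
      simp [hPinvT]
    · have h1 : (fromBlocks 0 1 Bᵀ Dᵀ : Matrix (Fin p ⊕ Fin q) (Fin n ⊕ Fin p) ℝ)ᵀ =
          (fromBlocks 0 1 Bᵀ Dᵀ : Matrix (Fin p ⊕ Fin q) (Fin n ⊕ Fin p) ℝ)ᴴ :=
        (conjTranspose_eq_transpose_of_trivial _).symm
      rw [h1]
      apply isHermitian_conjTranspose_mul_mul
      have e2 : (fromBlocks 0 (-1) 1 0 : Matrix (Fin p ⊕ Fin q) (Fin q ⊕ Fin p) ℝ)ᵀ
          = -(fromBlocks 0 (-1) 1 0 : Matrix (Fin q ⊕ Fin p) (Fin p ⊕ Fin q) ℝ) := by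
        ext i j
        cases i <;> cases j <;> simp [fromBlocks, transpose_apply, Matrix.one_apply, eq_comm]
      have e3 : (fromBlocks 0 (-1) 1 0 : Matrix (Fin q ⊕ Fin p) (Fin p ⊕ Fin q) ℝ)ᵀ
          = -(fromBlocks 0 (-1) 1 0 : Matrix (Fin p ⊕ Fin q) (Fin q ⊕ Fin p) ℝ) := by
        ext i j
        cases i <;> cases j <;> simp [fromBlocks, transpose_apply, Matrix.one_apply, eq_comm]
      show _ᴴ = _
      rw [conjTranspose_eq_transpose_of_trivial, transpose_mul, transpose_mul, hSinvT,
        e2, e3, Matrix.mul_neg, Matrix.neg_mul, Matrix.mul_neg, neg_neg, ← Matrix.mul_assoc]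
  · -- quadratic form part
    intro ζ
    have hstar : star ζ = ζ := funext fun _ => rfl
    rw [hstar, add_mulVec, dotProduct_add, quad_KHK', quad_KHK']
    have hK1 : fromBlocks 1 0 Aᵀ Cᵀ *ᵥ ζ =
        Sum.elim (ζ ∘ Sum.inl) (Aᵀ *ᵥ (ζ ∘ Sum.inl) + Cᵀ *ᵥ (ζ ∘ Sum.inr)) := by
      rw [fromBlocks_mulVec, one_mulVec, zero_mulVec, add_zero]
    have hK2 : fromBlocks 0 1 Bᵀ Dᵀ *ᵥ ζ =
        Sum.elim (ζ ∘ Sum.inr) (Bᵀ *ᵥ (ζ ∘ Sum.inl) + Dᵀ *ᵥ (ζ ∘ Sum.inr)) := by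
      rw [fromBlocks_mulVec, one_mulVec, zero_mulVec, zero_add]
    rw [hK1, hK2, quad_diag', neg_mulVec, dotProduct_neg]
    set ξ : Fin n → ℝ := ζ ∘ Sum.inl with hξ
    set η : Fin p → ℝ := ζ ∘ Sum.inr with hη
    set r : Fin n → ℝ := Aᵀ *ᵥ ξ + Cᵀ *ᵥ η with hr
    set w : Fin q → ℝ := Bᵀ *ᵥ ξ + Dᵀ *ᵥ η with hw
    set m : (Fin q ⊕ Fin p) → ℝ := Sum.elim w (-η) with hm
    set s : (Fin q ⊕ Fin p) → ℝ := S⁻¹ *ᵥ m with hs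
    set v₀ : ((Fin n → ℝ) × (Fin n → ℝ) × ((Fin q ⊕ Fin p) → ℝ)) :=
      (P⁻¹ *ᵥ r, P⁻¹ *ᵥ ξ, S⁻¹ *ᵥ m) with hv₀def
    have hPx₀ : P *ᵥ (P⁻¹ *ᵥ r) = r := by rw [mulVec_mulVec, hPP, one_mulVec]
    have hPz₀ : P *ᵥ (P⁻¹ *ᵥ ξ) = ξ := by rw [mulVec_mulVec, hPP, one_mulVec]
    have hSy₀ : S *ᵥ (S⁻¹ *ᵥ m) = m := by rw [mulVec_mulVec, hSS, one_mulVec]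
    have hsel : Sum.elim (s ∘ Sum.inl) (s ∘ Sum.inr) = s := by
      funext i; cases i <;> rfl
    -- the J-term of the goal
    have hJ2 : (fromBlocks 0 (-1) 1 0 : Matrix (Fin q ⊕ Fin p) (Fin p ⊕ Fin q) ℝ) *ᵥ
        Sum.elim η w = -m := by
      rw [fromBlocks_mulVec]
      funext i
      cases i with
      | inl i => simp [hm, neg_mulVec]
      | inr i => simp [hm]
    have hJquad : Sum.elim η w ⬝ᵥ
        (((fromBlocks 0 (-1) 1 0 : Matrix (Fin p ⊕ Fin q) (Fin q ⊕ Fin p) ℝ) * S⁻¹ *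
          (fromBlocks 0 (-1) 1 0 : Matrix (Fin q ⊕ Fin p) (Fin p ⊕ Fin q) ℝ)) *ᵥ Sum.elim η w)
        = η ⬝ᵥ (s ∘ Sum.inr) - w ⬝ᵥ (s ∘ Sum.inl) := by
      rw [← mulVec_mulVec, ← mulVec_mulVec, hJ2, mulVec_neg, ← hs, mulVec_neg]
      conv_lhs => rw [← hsel]
      rw [fromBlocks_mulVec]
      simp only [Sum.elim_comp_inl, Sum.elim_comp_inr, zero_mulVec, one_mulVec, neg_mulVec,
        zero_add, add_zero, dotProduct_neg]
      rw [sumElim_dotProduct_sumElim, dotProduct_neg]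
      ring
    have hms : m ⬝ᵥ s = w ⬝ᵥ (s ∘ Sum.inl) - η ⬝ᵥ (s ∘ Sum.inr) := by
      conv_lhs => rw [hm, ← hsel]
      rw [sumElim_dotProduct_sumElim, neg_dotProduct]
      ring
    have hQv₀ : Q v₀ = r ⬝ᵥ (P⁻¹ *ᵥ r) - ξ ⬝ᵥ (P⁻¹ *ᵥ ξ)
        + (w ⬝ᵥ (s ∘ Sum.inl) - η ⬝ᵥ (s ∘ Sum.inr)) := by
      rw [hQdef]
      show (P⁻¹ *ᵥ r) ⬝ᵥ (P *ᵥ (P⁻¹ *ᵥ r)) - (P⁻¹ *ᵥ ξ) ⬝ᵥ (P *ᵥ (P⁻¹ *ᵥ ξ))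
        + (S⁻¹ *ᵥ m) ⬝ᵥ (S *ᵥ (S⁻¹ *ᵥ m)) = _
      rw [hPx₀, hPz₀, hSy₀, ← hs, dotProduct_comm (P⁻¹ *ᵥ r) r,
        dotProduct_comm (P⁻¹ *ᵥ ξ) ξ, dotProduct_comm s m, hms]
    have hcross : ∀ a : (Fin n ⊕ Fin q) → ℝ, Bl (φ a) v₀ = 0 := by
      intro a
      rw [hφapp, hBl]
      show (a ∘ Sum.inl) ⬝ᵥ (P *ᵥ (P⁻¹ *ᵥ r))
          - (A *ᵥ (a ∘ Sum.inl) + B *ᵥ (a ∘ Sum.inr)) ⬝ᵥ (P *ᵥ (P⁻¹ *ᵥ ξ))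
          + Sum.elim (a ∘ Sum.inr) (C *ᵥ (a ∘ Sum.inl) + D *ᵥ (a ∘ Sum.inr)) ⬝ᵥ
              (S *ᵥ (S⁻¹ *ᵥ m)) = 0
      rw [hPx₀, hPz₀, hSy₀, hr, hm, sumElim_dotProduct_sumElim, hw]
      simp only [dotProduct_add, add_dotProduct, dotProduct_neg, neg_dotProduct,
        dotProduct_mulVec, vecMul_transpose]
      ring
    have hmix : ∀ (a : (Fin n ⊕ Fin q) → ℝ) (t : ℝ),
        Q (φ a + t • v₀) = Q (φ a) + t ^ 2 * Q v₀ := by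
      intro a t
      rw [hQexp, hcross, mul_zero, add_zero]
    have hkey := key_rank' α β Q hQαβ hab φ hφ hcard hφQ v₀ hmix
    rw [hQv₀] at hkey
    rw [hJquad]
    linarith
end

section
/- Let M = Mᵀ ∈ ℝ^{p×p} be a symmetric block matrix with blocks M_{ij} ∈ ℝ^{p_i×p_j} (p = Σp_i), and let F_i, G_i, H_i ∈ ℝ^{p_i×p_i} with F_i, H_i symmetric. Let M_i^r := [M_{i1}, …, M_{ik}] ∈ ℝ^{p_i×p} denote the i-th block row. Suppose for each i ∈ {1,…,k} there exists β_i > 0 such that (M_i^r)ᵀ F_i M_i^r − E_iᵀ G_iᵀ M_i^r − (M_i^r)ᵀ G_i E_i + E_iᵀ (H_i − β_i I) E_i ≥ 0, where E_i ∈ ℝ^{p_i×p} is the block selector matrix picking out the i-th block of coordinates. Then MFMᵀ − MG − GᵀMᵀ + H > 0, where F = diag(F₁,…,F_k), G = diag(G₁,…,G_k), H = diag(H₁,…,H_k). -/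
open Matrix

private lemma dot_bd {k : ℕ} {p : Fin k → ℕ} (D : ∀ i, Matrix (Fin (p i)) (Fin (p i)) ℝ)
    (u v : (Σ i, Fin (p i)) → ℝ) :
    u ⬝ᵥ (blockDiagonal' D *ᵥ v) =
      ∑ i, (fun a => u ⟨i, a⟩) ⬝ᵥ (D i *ᵥ fun a => v ⟨i, a⟩) := by
  simp only [dotProduct, mulVec]
  rw [← Finset.univ_sigma_univ, Finset.sum_sigma]
  refine Finset.sum_congr rfl fun i _ => Finset.sum_congr rfl fun a _ => ?_
  congr 1
  rw [Finset.sum_sigma, Finset.sum_eq_single i]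
  · simp [dotProduct]
  · intro j _ hj
    apply Finset.sum_eq_zero; intro b _
    rw [blockDiagonal'_apply_ne D a b (fun h => hj h.symm), zero_mul]
  · simp

private lemma quad2 {n m l : Type*} [Fintype n] [Fintype m] [Fintype l] (A : Matrix m n ℝ)
    (B : Matrix m l ℝ) (C : Matrix l n ℝ) (x : n → ℝ) :
    x ⬝ᵥ ((Aᵀ * B * C) *ᵥ x) = (A *ᵥ x) ⬝ᵥ (B *ᵥ (C *ᵥ x)) := by
  rw [← mulVec_mulVec, ← mulVec_mulVec, dotProduct_mulVec, vecMul_transpose]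

private lemma quad1 {n m : Type*} [Fintype n] [Fintype m] (A : Matrix m n ℝ)
    (B : Matrix m n ℝ) (x : n → ℝ) :
    x ⬝ᵥ ((Aᵀ * B) *ᵥ x) = (A *ᵥ x) ⬝ᵥ (B *ᵥ x) := by
  rw [← mulVec_mulVec, dotProduct_mulVec, vecMul_transpose]

private lemma dotT {n m : Type*} [Fintype n] [Fintype m] (B : Matrix m n ℝ)
    (z : n → ℝ) (y : m → ℝ) : z ⬝ᵥ (Bᵀ *ᵥ y) = y ⬝ᵥ (B *ᵥ z) := by
  rw [dotProduct_mulVec, vecMul_transpose, dotProduct_comm]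

/-- Decentralized conditions imply the global stability condition:
if each block row M_i^r satisfies the local LMI with some β_i > 0, then
M F Mᵀ - M G - Gᵀ Mᵀ + H ≻ 0 for the block-diagonal F, G, H. -/
theorem stmt_8 {k : ℕ} (p : Fin k → ℕ)
    (M : Matrix (Σ i, Fin (p i)) (Σ i, Fin (p i)) ℝ) (hM : M.IsSymm)
    (F G H : ∀ i, Matrix (Fin (p i)) (Fin (p i)) ℝ)
    (hF : ∀ i, (F i).IsSymm) (hH : ∀ i, (H i).IsSymm)
    (E : ∀ i, Matrix (Fin (p i)) (Σ j, Fin (p j)) ℝ)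
    (hE : ∀ i (a : Fin (p i)) (j : Σ j, Fin (p j)),
      E i a j = if h : j.1 = i then (if h ▸ j.2 = a then 1 else 0) else 0)
    (Mr : ∀ i, Matrix (Fin (p i)) (Σ j, Fin (p j)) ℝ)
    (hMr : ∀ i (a : Fin (p i)) (j : Σ j, Fin (p j)), Mr i a j = M ⟨i, a⟩ j)
    (hloc : ∀ i, ∃ β : ℝ, 0 < β ∧
      ((Mr i)ᵀ * F i * Mr i - (E i)ᵀ * (G i)ᵀ * Mr i - (Mr i)ᵀ * G i * E i +
        (E i)ᵀ * (H i - β • 1) * E i).PosSemidef) :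
    (M * blockDiagonal' F * Mᵀ - M * blockDiagonal' G -
      (blockDiagonal' G)ᵀ * Mᵀ + blockDiagonal' H).PosDef := by
  choose β hβ hpsd using hloc
  have hMt : Mᵀ = M := hM.eq
  have hFt : (blockDiagonal' F)ᵀ = blockDiagonal' F := by
    rw [blockDiagonal'_transpose]
    exact congrArg _ (funext fun i => hF i)
  have hHt : (blockDiagonal' H)ᵀ = blockDiagonal' H := by
    rw [blockDiagonal'_transpose]
    exact congrArg _ (funext fun i => hH i)
  rw [posDef_iff_dotProduct_mulVec]
  constructor
  · -- Hermitian
    rw [IsHermitian, conjTranspose_eq_transpose_of_trivial, transpose_add, transpose_sub,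
      transpose_sub, transpose_mul, transpose_mul, transpose_mul, transpose_mul,
      transpose_transpose, transpose_transpose, hFt, hHt, hMt, ← mul_assoc, sub_right_comm]
  · intro x hx
    have hstar : star x = x := by funext j; simp
    rw [hstar]
    set u : (Σ i, Fin (p i)) → ℝ := M *ᵥ x with hu
    have hy : ∀ i, (fun a => u ⟨i, a⟩) = Mr i *ᵥ x := by
      intro i; funext a
      simp only [hu, mulVec, dotProduct]
      exact Finset.sum_congr rfl fun j _ => by rw [hMr]
    have hz : ∀ i (a : Fin (p i)), (E i *ᵥ x) a = x ⟨i, a⟩ := by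
      intro i a
      simp only [mulVec, dotProduct]
      rw [Finset.sum_eq_single (⟨i, a⟩ : Σ j, Fin (p j))]
      · rw [hE]; simp
      · rintro ⟨j1, j2⟩ _ hj
        rw [hE]
        by_cases h : j1 = i
        · subst h
          have hne : j2 ≠ a := fun hba => hj (by rw [hba])
          simp [hne]
        · simp [h]
      · simp
    have hzf : ∀ i, (fun a => x ⟨i, a⟩) = E i *ᵥ x := fun i =>
      funext fun a => (hz i a).symm
    -- global quadratic form decomposition
    have key : x ⬝ᵥ ((M * blockDiagonal' F * Mᵀ - M * blockDiagonal' G -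
        (blockDiagonal' G)ᵀ * Mᵀ + blockDiagonal' H) *ᵥ x) =
        ∑ i, ((Mr i *ᵥ x) ⬝ᵥ (F i *ᵥ (Mr i *ᵥ x))
          - (Mr i *ᵥ x) ⬝ᵥ (G i *ᵥ (E i *ᵥ x))
          - (Mr i *ᵥ x) ⬝ᵥ (G i *ᵥ (E i *ᵥ x))
          + (E i *ᵥ x) ⬝ᵥ (H i *ᵥ (E i *ᵥ x))) := by
      rw [add_mulVec, sub_mulVec, sub_mulVec, dotProduct_add, dotProduct_sub, dotProduct_sub]
      have t1 : x ⬝ᵥ ((M * blockDiagonal' F * Mᵀ) *ᵥ x) =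
          ∑ i, (Mr i *ᵥ x) ⬝ᵥ (F i *ᵥ (Mr i *ᵥ x)) := by
        rw [hMt, show M * blockDiagonal' F * M = Mᵀ * blockDiagonal' F * M from by rw [hMt],
          quad2, ← hu, dot_bd]
        exact Finset.sum_congr rfl fun i _ => by rw [hy]
      have t2 : x ⬝ᵥ ((M * blockDiagonal' G) *ᵥ x) =
          ∑ i, (Mr i *ᵥ x) ⬝ᵥ (G i *ᵥ (E i *ᵥ x)) := by
        rw [show M * blockDiagonal' G = Mᵀ * blockDiagonal' G from by rw [hMt],
          quad1, ← hu, dot_bd]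
        exact Finset.sum_congr rfl fun i _ => by rw [hy, hzf]
      have t3 : x ⬝ᵥ (((blockDiagonal' G)ᵀ * Mᵀ) *ᵥ x) =
          ∑ i, (Mr i *ᵥ x) ⬝ᵥ (G i *ᵥ (E i *ᵥ x)) := by
        rw [hMt, ← mulVec_mulVec, ← hu, dotT, dot_bd]
        exact Finset.sum_congr rfl fun i _ => by rw [hy, hzf]
      have t4 : x ⬝ᵥ (blockDiagonal' H *ᵥ x) =
          ∑ i, (E i *ᵥ x) ⬝ᵥ (H i *ᵥ (E i *ᵥ x)) := by
        rw [dot_bd]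
        exact Finset.sum_congr rfl fun i _ => by rw [hzf]
      rw [t1, t2, t3, t4, ← Finset.sum_sub_distrib, ← Finset.sum_sub_distrib,
        ← Finset.sum_add_distrib]
    rw [key]
    -- local bounds
    have hlocb : ∀ i, β i * ((E i *ᵥ x) ⬝ᵥ (E i *ᵥ x)) ≤
        ((Mr i *ᵥ x) ⬝ᵥ (F i *ᵥ (Mr i *ᵥ x))
          - (Mr i *ᵥ x) ⬝ᵥ (G i *ᵥ (E i *ᵥ x))
          - (Mr i *ᵥ x) ⬝ᵥ (G i *ᵥ (E i *ᵥ x))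
          + (E i *ᵥ x) ⬝ᵥ (H i *ᵥ (E i *ᵥ x))) := by
      intro i
      have h0 := (hpsd i).dotProduct_mulVec_nonneg x
      rw [show star x = x from by funext j; simp] at h0
      rw [add_mulVec, sub_mulVec, sub_mulVec, dotProduct_add, dotProduct_sub, dotProduct_sub,
        quad2, quad2, quad2, quad2, dotT, sub_mulVec, dotProduct_sub, smul_mulVec,
        one_mulVec, dotProduct_smul, smul_eq_mul] at h0
      linarith
    refine lt_of_lt_of_le ?_ (Finset.sum_le_sum fun i _ => hlocb i)
    -- positivity of ∑ βᵢ ‖zᵢ‖²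
    obtain ⟨⟨i0, a0⟩, hxj⟩ : ∃ j, x j ≠ 0 := by
      by_contra h; push_neg at h; exact hx (funext h)
    have hznn : ∀ i, 0 ≤ (E i *ᵥ x) ⬝ᵥ (E i *ᵥ x) := fun i =>
      Finset.sum_nonneg fun a _ => mul_self_nonneg _
    refine Finset.sum_pos' (fun i _ => mul_nonneg (hβ i).le (hznn i)) ⟨i0, Finset.mem_univ _, ?_⟩
    refine mul_pos (hβ i0) ((hznn i0).lt_of_ne fun h => ?_)
    have hz0 : (E i0 *ᵥ x) = 0 := dotProduct_self_eq_zero.mp h.symm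
    apply hxj
    rw [← hz i0 a0, hz0]
    rfl
end

section
/- Let W ∈ ℝ^{(n+p)×N} and suppose the data matrices satisfy [X⁺; Y] = [A, B₁, B₂; C, D₁, D₂][X; U; V] + W. Then Wᵀ satisfies the QMI [I; Wᵀ]ᵀ Φ [I; Wᵀ] ≥ 0 (for symmetric Φ ∈ S^{(n+p)+N}) if and only if the stacked system matrix Z := [Aᵀ, Cᵀ; B₁ᵀ, D₁ᵀ; B₂ᵀ, D₂ᵀ] ∈ ℝ^{(n+m+p)×(n+p)} satisfies [I; Z]ᵀ J [I; Z] ≥ 0, where J := [I, [X⁺; Y]; 0, [−X; −U; −V]] Φ [I, [X⁺; Y]; 0, [−X; −U; −V]]ᵀ. -/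
open Matrix

/-- Parametrization of systems consistent with noisy data: with
[X⁺;Y] = [A,B₁,B₂;C,D₁,D₂][X;U;V] + W, the noise QMI for Wᵀ holds iff the
stacked system matrix Z = [Aᵀ,Cᵀ;B₁ᵀ,D₁ᵀ;B₂ᵀ,D₂ᵀ] satisfies the QMI for J. -/
theorem stmt_11 {n m p N : ℕ}
    (X Xp : Matrix (Fin n) (Fin N) ℝ) (U : Matrix (Fin m) (Fin N) ℝ)
    (V Y : Matrix (Fin p) (Fin N) ℝ)
    (A : Matrix (Fin n) (Fin n) ℝ) (B₁ : Matrix (Fin n) (Fin m) ℝ)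
    (B₂ : Matrix (Fin n) (Fin p) ℝ)
    (C : Matrix (Fin p) (Fin n) ℝ) (D₁ : Matrix (Fin p) (Fin m) ℝ)
    (D₂ : Matrix (Fin p) (Fin p) ℝ)
    (W : Matrix (Fin n ⊕ Fin p) (Fin N) ℝ)
    (Φ : Matrix ((Fin n ⊕ Fin p) ⊕ Fin N) ((Fin n ⊕ Fin p) ⊕ Fin N) ℝ)
    (hΦ : Φ.IsSymm)
    (hdata : fromRows Xp Y =
      fromBlocks A (fromCols B₁ B₂) C (fromCols D₁ D₂) *
        fromRows X (fromRows U V) + W) :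
    ((fromRows (1 : Matrix (Fin n ⊕ Fin p) (Fin n ⊕ Fin p) ℝ) Wᵀ)ᵀ * Φ * fromRows 1 Wᵀ).PosSemidef ↔
    ((fromRows (1 : Matrix (Fin n ⊕ Fin p) (Fin n ⊕ Fin p) ℝ) (fromBlocks A (fromCols B₁ B₂) C (fromCols D₁ D₂))ᵀ)ᵀ *
      (fromBlocks (1 : Matrix (Fin n ⊕ Fin p) (Fin n ⊕ Fin p) ℝ) (fromRows Xp Y) 0 (-(fromRows X (fromRows U V))) * Φ *
       (fromBlocks (1 : Matrix (Fin n ⊕ Fin p) (Fin n ⊕ Fin p) ℝ) (fromRows Xp Y) 0 (-(fromRows X (fromRows U V))))ᵀ) *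
      fromRows 1 (fromBlocks A (fromCols B₁ B₂) C (fromCols D₁ D₂))ᵀ).PosSemidef := by
  set G := fromBlocks A (fromCols B₁ B₂) C (fromCols D₁ D₂) with hG
  set F := fromRows Xp Y with hF
  set H := fromRows X (fromRows U V) with hH
  set M : Matrix ((Fin n ⊕ Fin p) ⊕ (Fin n ⊕ (Fin m ⊕ Fin p)))
      ((Fin n ⊕ Fin p) ⊕ Fin N) ℝ :=
    fromBlocks (1 : Matrix (Fin n ⊕ Fin p) (Fin n ⊕ Fin p) ℝ) F 0 (-H) with hM
  have key : Mᵀ * fromRows (1 : Matrix (Fin n ⊕ Fin p) (Fin n ⊕ Fin p) ℝ) Gᵀ = fromRows (1 : Matrix (Fin n ⊕ Fin p) (Fin n ⊕ Fin p) ℝ) Wᵀ := by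
    rw [hM, fromBlocks_transpose, fromBlocks_mul_fromRows, hdata]
    simp [Matrix.transpose_add, Matrix.transpose_mul]
  have main : (fromRows (1 : Matrix (Fin n ⊕ Fin p) (Fin n ⊕ Fin p) ℝ) Gᵀ)ᵀ * (M * Φ * Mᵀ) * fromRows (1 : Matrix (Fin n ⊕ Fin p) (Fin n ⊕ Fin p) ℝ) Gᵀ =
      (fromRows (1 : Matrix (Fin n ⊕ Fin p) (Fin n ⊕ Fin p) ℝ) Wᵀ)ᵀ * Φ * fromRows (1 : Matrix (Fin n ⊕ Fin p) (Fin n ⊕ Fin p) ℝ) Wᵀ := by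
    rw [← key]
    rw [Matrix.transpose_mul, Matrix.transpose_transpose]
    simp only [Matrix.mul_assoc]
  exact Iff.of_eq (congrArg Matrix.PosSemidef main).symm
end

section
/- Let Θ ∈ S^{q+r} be symmetric and invertible with block Θ₂₂ ≤ 0, ker(Θ₂₂) ⊆ ker(Θ₁₂), and Θ₁₁ − Θ₁₂Θ₂₂†Θ₂₁ ≥ 0 (i.e., Θ ∈ Π_{q,r}), and suppose the set { Z ∈ ℝ^{r×q} : [I; Z]ᵀΘ[I; Z] ≥ 0 } is nonempty. Then Θ has inertia (r, 0, q): exactly r negative and q positive eigenvalues. -/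
open Matrix

/-- Y is the Moore-Penrose pseudoinverse of A (four Penrose equations). -/
def IsMoorePenrose {m n : Type*} [Fintype m] [Fintype n]
    (A : Matrix m n ℝ) (Y : Matrix n m ℝ) : Prop :=
  A * Y * A = A ∧ Y * A * Y = Y ∧ (A * Y)ᵀ = A * Y ∧ (Y * A)ᵀ = Y * A

section Aux

lemma sylvester_count_le {n m : Type*} [Fintype n] [Fintype m] [DecidableEq n] [DecidableEq m]
    (d : n → ℝ) (e : m → ℝ) (P : Matrix m n ℝ)
    (h : diagonal d = Pᵀ * diagonal e * P) :
    Fintype.card {i // 0 < d i} ≤ Fintype.card {j // 0 < e j} := by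
  by_contra hlt
  push_neg at hlt
  set ext : ({i // 0 < d i} → ℝ) → (n → ℝ) :=
    fun x i => if hi : 0 < d i then x ⟨i, hi⟩ else 0 with hext
  have hextlin : ∀ (a b : {i // 0 < d i} → ℝ) (c : ℝ),
      ext (a + c • b) = ext a + c • ext b := by
    intro a b c; funext i; by_cases hi : 0 < d i <;> simp [hext, hi]
  let φ : ({i // 0 < d i} → ℝ) →ₗ[ℝ] ({j // 0 < e j} → ℝ) :=
    { toFun := fun x j => (P *ᵥ ext x) j.1
      map_add' := by
        intro a b; funext j
        have := hextlin a b 1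
        simp only [one_smul] at this
        simp [this, Matrix.mulVec_add]
      map_smul' := by
        intro c a; funext j
        have := hextlin 0 a c
        have h0 : ext 0 = 0 := by funext i; by_cases hi : 0 < d i <;> simp [hext, hi]
        simp only [h0, zero_add] at this
        simp [this, Matrix.mulVec_smul] }
  have hninj : ¬ Function.Injective φ := by
    intro hinj
    have := LinearMap.finrank_le_finrank_of_injective hinj
    simp only [Module.finrank_pi] at this
    omega
  rw [← LinearMap.ker_eq_bot] at hninj
  obtain ⟨z, hz, hz0⟩ := Submodule.exists_mem_ne_zero_of_ne_bot hninj
  set y : n → ℝ := ext z with hy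
  have hq1 : 0 < y ⬝ᵥ (diagonal d *ᵥ y) := by
    have hsum : y ⬝ᵥ (diagonal d *ᵥ y) = ∑ i, d i * (y i)^2 := by
      simp [dotProduct, mulVec_diagonal]; ring_nf
      exact Finset.sum_congr rfl fun i _ => by ring
    rw [hsum]
    obtain ⟨i0, hi0⟩ := Function.ne_iff.mp hz0
    apply Finset.sum_pos'
    · intro i _
      by_cases hi : 0 < d i
      · positivity
      · simp [hy, hext, hi]
    · refine ⟨i0.1, Finset.mem_univ _, ?_⟩
      have : y i0.1 = z i0 := by simp [hy, hext, i0.2]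
      rw [this]
      exact mul_pos i0.2 (pow_two_pos_of_ne_zero hi0)
  have hq2 : y ⬝ᵥ (diagonal d *ᵥ y) ≤ 0 := by
    have hmem : φ z = 0 := hz
    have hw : ∀ j : m, 0 < e j → (P *ᵥ y) j = 0 := by
      intro j hj
      have := congrFun hmem ⟨j, hj⟩
      simpa [φ] using this
    rw [h]
    have : y ⬝ᵥ ((Pᵀ * diagonal e * P) *ᵥ y) = (P *ᵥ y) ⬝ᵥ (diagonal e *ᵥ (P *ᵥ y)) := by
      rw [← Matrix.mulVec_mulVec, ← Matrix.mulVec_mulVec, Matrix.dotProduct_mulVec _ Pᵀ,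
        Matrix.vecMul_transpose]
    rw [this]
    have hsum : (P *ᵥ y) ⬝ᵥ (diagonal e *ᵥ (P *ᵥ y)) = ∑ j, e j * ((P *ᵥ y) j)^2 := by
      simp [dotProduct, mulVec_diagonal]
      exact Finset.sum_congr rfl fun j _ => by ring
    rw [hsum]
    apply Finset.sum_nonpos
    intro j _
    by_cases hj : 0 < e j
    · simp [hw j hj]
    · push_neg at hj
      exact mul_nonpos_of_nonpos_of_nonneg hj (sq_nonneg _)
  linarith

lemma posDef_of_posSemidef_ker {n : Type*} [Fintype n] {A : Matrix n n ℝ}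
    (hA : A.PosSemidef) (hk : ∀ x, A *ᵥ x = 0 → x = 0) : A.PosDef := by
  classical
  refine hA.posDef_iff_isUnit.mpr (Matrix.mulVec_injective_iff_isUnit.mp fun x y hxy => ?_)
  exact sub_eq_zero.mp (hk (x - y) (by rw [Matrix.mulVec_sub, hxy, sub_self]))

lemma posDef_of_posSemidef_isUnit {n : Type*} [Fintype n] [DecidableEq n] {A : Matrix n n ℝ}
    (hA : A.PosSemidef) (hu : IsUnit A) : A.PosDef := by
  refine posDef_of_posSemidef_ker hA fun x hx => ?_
  have := Matrix.mulVec_injective_iff_isUnit.mpr hu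
  have := this (a₁ := x) (a₂ := 0) (by simpa using hx)
  simpa using this

end Aux

/-- An invertible symmetric Θ ∈ Π_{q,r} (Θ₂₂ ≤ 0, ker Θ₂₂ ⊆ ker Θ₁₂,
Θ₁₁ - Θ₁₂Θ₂₂†Θ₂₁ ≥ 0) with nonempty QMI set has inertia (r, 0, q). -/
theorem stmt_13 {q r : ℕ}
    (Θ : Matrix (Fin q ⊕ Fin r) (Fin q ⊕ Fin r) ℝ)
    (hΘ : Θ.IsHermitian) (hinv : IsUnit Θ)
    (h22 : (-(Θ.toBlocks₂₂)).PosSemidef)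
    (hker : ∀ x : Fin r → ℝ, Θ.toBlocks₂₂.mulVec x = 0 → Θ.toBlocks₁₂.mulVec x = 0)
    (hschur : ∃ Y, IsMoorePenrose Θ.toBlocks₂₂ Y ∧
      (Θ.toBlocks₁₁ - Θ.toBlocks₁₂ * Y * Θ.toBlocks₂₁).PosSemidef)
    (hne : ∃ Z : Matrix (Fin r) (Fin q) ℝ,
      ((fromRows (1 : Matrix (Fin q) (Fin q) ℝ) Z)ᵀ * Θ * fromRows (1 : Matrix (Fin q) (Fin q) ℝ) Z).PosSemidef) :
    inertia Θ hΘ = (r, 0, q) := by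
  unfold inertia
  obtain ⟨Y, hMPfull, hS⟩ := hschur
  have hMP := hMPfull.1
  set A := Θ.toBlocks₁₁ with hA
  set B := Θ.toBlocks₁₂ with hB
  set C := Θ.toBlocks₂₁ with hC
  set D := Θ.toBlocks₂₂ with hD
  have hΘeq : Θ = fromBlocks A B C D := (fromBlocks_toBlocks Θ).symm
  have hCB : C = Bᵀ := by
    ext i j
    have := hΘ.apply (Sum.inr i) (Sum.inl j)
    simpa [hC, hB, toBlocks₂₁, toBlocks₁₂] using this.symm
  have hDh : Dᵀ = D := by
    ext i j
    have := hΘ.apply (Sum.inr i) (Sum.inr j)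
    simpa [hD, toBlocks₂₂] using this
  -- D is invertible
  have hDker : ∀ x, D *ᵥ x = 0 → x = 0 := by
    intro x hx
    have hBx : B *ᵥ x = 0 := hker x hx
    have h0 : Θ *ᵥ (Sum.elim 0 x) = 0 := by
      rw [hΘeq, fromBlocks_mulVec]
      simp [hx, hBx]
    have hinj := Matrix.mulVec_injective_iff_isUnit.mpr hinv
    have heq := hinj (a₁ := Sum.elim 0 x) (a₂ := 0) (by simpa using h0)
    funext i
    simpa using congrFun heq (Sum.inr i)
  have hnDpd : (-D).PosDef := by
    refine posDef_of_posSemidef_ker h22 fun x hx => ?_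
    apply hDker
    have : -(D *ᵥ x) = 0 := by rwa [← Matrix.neg_mulVec]
    simpa using this
  have hDunit : IsUnit D := by
    have h := hnDpd.isUnit.neg; rwa [neg_neg] at h
  have hDdet : IsUnit D.det := (Matrix.isUnit_iff_isUnit_det _).mp hDunit
  have hD1 : D * D⁻¹ = 1 := Matrix.mul_nonsing_inv _ hDdet
  have hD2 : D⁻¹ * D = 1 := Matrix.nonsing_inv_mul _ hDdet
  have hY : Y = D⁻¹ := by
    calc Y = (D⁻¹ * D) * Y * (D * D⁻¹) := by rw [hD2, hD1, one_mul, mul_one]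
    _ = D⁻¹ * (D * Y * D) * D⁻¹ := by simp only [Matrix.mul_assoc]
    _ = D⁻¹ := by rw [hMP, hD2, one_mul]
  set S := A - B * D⁻¹ * C with hSdef
  have hSpsd : S.PosSemidef := by rw [hSdef, ← hY]; exact hS
  -- factorization
  set L : Matrix (Fin q ⊕ Fin r) (Fin q ⊕ Fin r) ℝ := fromBlocks 1 0 (D⁻¹ * C) 1 with hL
  have hLt : Lᵀ = fromBlocks 1 (B * D⁻¹) 0 1 := by
    rw [hL, fromBlocks_transpose, transpose_mul, transpose_nonsing_inv, hDh, hCB,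
      transpose_transpose, transpose_one, transpose_one, transpose_zero]
  have hfact : Θ = Lᵀ * fromBlocks S 0 0 D * L := by
    rw [hLt, hL, hΘeq, fromBlocks_multiply, fromBlocks_multiply]
    have h3 : B * D⁻¹ * D = B := by rw [Matrix.mul_assoc, hD2, Matrix.mul_one]
    have h4 : D * (D⁻¹ * C) = C := by rw [← Matrix.mul_assoc, hD1, Matrix.one_mul]
    simp only [Matrix.mul_one, Matrix.one_mul, Matrix.mul_zero, Matrix.zero_mul,
      add_zero, zero_add, h3, h4, hSdef]
    rw [Matrix.mul_assoc B, sub_add_cancel]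
  have hdetL : L.det = 1 := by
    rw [hL, det_fromBlocks_zero₁₂]; simp
  have hSdet : IsUnit S.det := by
    have h1 : Θ.det = S.det * D.det := by
      rw [hfact, det_mul, det_mul, det_transpose, hdetL, det_fromBlocks_zero₁₂]
      ring
    have h2 := (Matrix.isUnit_iff_isUnit_det _).mp hinv
    rw [h1] at h2
    exact isUnit_of_mul_isUnit_left h2
  have hSpd : S.PosDef := posDef_of_posSemidef_isUnit hSpsd ((Matrix.isUnit_iff_isUnit_det _).mpr hSdet)
  -- square roots
  open scoped MatrixOrder in set R := CFC.sqrt S with hR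
  open scoped MatrixOrder in have hRR : R * R = S := CFC.sqrt_mul_sqrt_self S hSpsd.nonneg
  have hRt : Rᵀ = R := by
    open scoped MatrixOrder in ext i j; simpa using ((CFC.sqrt_nonneg S).posSemidef.1.apply i j)
  have hRdet : IsUnit R.det := by
    have : R.det * R.det = S.det := by rw [← det_mul, hRR]
    rw [isUnit_iff_ne_zero] at hSdet ⊢
    intro h0; rw [h0, mul_zero] at this; exact hSdet this.symm
  open scoped MatrixOrder in set T := CFC.sqrt (-D) with hT
  open scoped MatrixOrder in have hTT : T * T = -D := CFC.sqrt_mul_sqrt_self (-D) h22.nonneg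
  have hTt : Tᵀ = T := by
    open scoped MatrixOrder in ext i j; simpa using ((CFC.sqrt_nonneg (-D)).posSemidef.1.apply i j)
  have hTdet : IsUnit T.det := by
    have h1 : T.det * T.det = (-D).det := by rw [← det_mul, hTT]
    have h2 : IsUnit (-D).det := (Matrix.isUnit_iff_isUnit_det _).mp hnDpd.isUnit
    rw [isUnit_iff_ne_zero] at h2 ⊢
    intro h0; rw [h0, mul_zero] at h1; exact h2 h1.symm
  -- the signature matrix
  set e : Fin q ⊕ Fin r → ℝ := Sum.elim (fun _ => (1:ℝ)) (fun _ => (-1:ℝ)) with he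
  have hJ : diagonal e = fromBlocks (1 : Matrix (Fin q) (Fin q) ℝ) 0 0
      (-1 : Matrix (Fin r) (Fin r) ℝ) := by
    have hm : (diagonal fun _ : Fin r => (-1:ℝ)) = -1 := by
      rw [← diagonal_neg, diagonal_one]
    rw [he, ← fromBlocks_diagonal, diagonal_one, hm]
  set N : Matrix (Fin q ⊕ Fin r) (Fin q ⊕ Fin r) ℝ := fromBlocks R 0 0 T with hN
  have hBD : fromBlocks S 0 0 D = Nᵀ * diagonal e * N := by
    rw [hJ, hN, fromBlocks_transpose, hRt, hTt, transpose_zero, fromBlocks_multiply,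
      fromBlocks_multiply]
    simp [hRR, hTT]
  have hdetN : IsUnit N.det := by
    rw [hN, det_fromBlocks_zero₁₂]
    exact hRdet.mul hTdet
  -- spectral theorem
  set U : Matrix (Fin q ⊕ Fin r) (Fin q ⊕ Fin r) ℝ := (hΘ.eigenvectorUnitary :
    Matrix (Fin q ⊕ Fin r) (Fin q ⊕ Fin r) ℝ) with hU
  set μ : Fin q ⊕ Fin r → ℝ := hΘ.eigenvalues with hμ
  have hstarU : star U = Uᵀ := by
    ext i j; simp [Matrix.star_eq_conjTranspose]
  have hspec : diagonal μ = Uᵀ * Θ * U := by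
    have h1 : star (hΘ.eigenvectorUnitary : Matrix (Fin q ⊕ Fin r) (Fin q ⊕ Fin r) ℝ) * Θ *
        (hΘ.eigenvectorUnitary : Matrix (Fin q ⊕ Fin r) (Fin q ⊕ Fin r) ℝ) = diagonal (RCLike.ofReal ∘ hΘ.eigenvalues) := by
      have := hΘ.conjStarAlgAut_star_eigenvectorUnitary
      simpa only [Unitary.conjStarAlgAut_apply, Unitary.coe_star, star_star] using this
    rw [hstarU] at h1
    rw [hμ, hU, h1, RCLike.ofReal_real_eq_id, Function.id_comp]
  have hUdet : IsUnit U.det := by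
    have h1 : star U * U = 1 := by
      have := hΘ.eigenvectorUnitary.2
      exact (Matrix.mem_unitaryGroup_iff'.mp this)
    have : (star U).det * U.det = 1 := by rw [← det_mul, h1, det_one]
    exact IsUnit.of_mul_eq_one _ ((mul_comm _ _).trans this)
  -- congruence chain
  set P : Matrix (Fin q ⊕ Fin r) (Fin q ⊕ Fin r) ℝ := N * L * U with hP
  have hcong : diagonal μ = Pᵀ * diagonal e * P := by
    rw [hspec, hfact, hBD, hP]
    simp only [transpose_mul, Matrix.mul_assoc]
  have hPdet : IsUnit P.det := by
    rw [hP, det_mul, det_mul]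
    exact (hdetN.mul ((Matrix.isUnit_iff_isUnit_det _).mp
      ((Matrix.isUnit_iff_isUnit_det _).mpr (hdetL ▸ isUnit_one)))).mul hUdet
  have hP1 : P * P⁻¹ = 1 := Matrix.mul_nonsing_inv _ hPdet
  have hP2 : (P⁻¹)ᵀ * Pᵀ = 1 := by rw [← transpose_mul, hP1, transpose_one]
  have hcong2 : diagonal e = (P⁻¹)ᵀ * diagonal μ * P⁻¹ := by
    rw [hcong]
    have hassoc : (P⁻¹)ᵀ * (Pᵀ * diagonal e * P) * P⁻¹
        = ((P⁻¹)ᵀ * Pᵀ) * (diagonal e * (P * P⁻¹)) := by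
      simp only [Matrix.mul_assoc]
    rw [hassoc, hP2, hP1, one_mul, mul_one]
  -- counts for e
  have hepos : Fintype.card {j // 0 < e j} = q := by
    rw [Fintype.card_congr (Equiv.subtypeSum), Fintype.card_sum]
    have h1 : Fintype.card {a : Fin q // 0 < e (Sum.inl a)} = q := by
      rw [Fintype.card_congr (Equiv.subtypeUnivEquiv (fun a => by norm_num [he]))]
      exact Fintype.card_fin q
    have h2 : Fintype.card {b : Fin r // 0 < e (Sum.inr b)} = 0 := by
      rw [Fintype.card_eq_zero_iff]
      exact ⟨fun x => by have := x.2; norm_num [he] at this⟩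
    rw [h1, h2]
    omega
  have heneg : Fintype.card {j // 0 < -(e j)} = r := by
    rw [Fintype.card_congr (Equiv.subtypeSum), Fintype.card_sum]
    have h1 : Fintype.card {a : Fin q // 0 < -(e (Sum.inl a))} = 0 := by
      rw [Fintype.card_eq_zero_iff]
      exact ⟨fun x => by have := x.2; norm_num [he] at this⟩
    have h2 : Fintype.card {b : Fin r // 0 < -(e (Sum.inr b))} = r := by
      rw [Fintype.card_congr (Equiv.subtypeUnivEquiv (fun b => by norm_num [he]))]
      exact Fintype.card_fin r
    rw [h1, h2]
    omega
  -- count of positive eigenvalues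
  have hpos : Fintype.card {i // 0 < μ i} = q := by
    exact (le_antisymm (sylvester_count_le μ e P hcong)
      (sylvester_count_le e μ P⁻¹ hcong2)).trans hepos
  -- count of negative eigenvalues
  have hcongneg : diagonal (fun i => -(μ i)) = Pᵀ * diagonal (fun j => -(e j)) * P := by
    rw [← diagonal_neg, ← diagonal_neg, Matrix.mul_neg, Matrix.neg_mul]
    exact congrArg Neg.neg hcong
  have hcongneg2 : diagonal (fun j => -(e j)) = (P⁻¹)ᵀ * diagonal (fun i => -(μ i)) * P⁻¹ := by
    rw [← diagonal_neg, ← diagonal_neg, Matrix.mul_neg, Matrix.neg_mul]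
    exact congrArg Neg.neg hcong2
  have hneg : Fintype.card {i // μ i < 0} = r := by
    have h1 : Fintype.card {i // 0 < -(μ i)} = Fintype.card {j // 0 < -(e j)} :=
      le_antisymm (sylvester_count_le _ _ P hcongneg)
        (sylvester_count_le _ _ P⁻¹ hcongneg2)
    have h2 : Fintype.card {i // μ i < 0} = Fintype.card {i // 0 < -(μ i)} :=
      Fintype.card_congr (Equiv.subtypeEquivRight (fun i => by constructor <;> intro h <;> linarith))
    rw [h2, h1, heneg]
  -- no zero eigenvalues
  have hzero : Fintype.card {i // μ i = 0} = 0 := by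
    have hdet : Θ.det = ∏ i, μ i := by
      have := hΘ.det_eq_prod_eigenvalues
      simpa using this
    have hne : ∀ i, μ i ≠ 0 := by
      intro i h0
      have := (Matrix.isUnit_iff_isUnit_det _).mp hinv
      rw [isUnit_iff_ne_zero, hdet] at this
      exact this (Finset.prod_eq_zero (Finset.mem_univ i) h0)
    rw [Fintype.card_eq_zero_iff]
    exact ⟨fun x => hne x.1 x.2⟩
  rw [Prod.mk.injEq, Prod.mk.injEq]
  exact ⟨hneg, hzero, hpos⟩
end
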